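/- For every natural number C, the number of pairs (x,y) ∈ ℤ² with x² + y² = 5^C equals 4·(C+1). -/
import Mathlib

namespace SqSum5

def A : GaussianInt := ⟨2, 1⟩
def B : GaussianInt := ⟨2, -1⟩
def J : GaussianInt := ⟨0, 1⟩

lemma normA : A.norm = 5 := by decide
lemma normB : B.norm = 5 := by decide
lemma normJ : J.norm = 1 := by decide
lemma starA : star A = B := by decide
lemma A_mul_B : A * B = 5 := by decide
lemma A_ne_zero : A ≠ 0 := by decide
lemma B_ne_zero : B ≠ 0 := by decide
lemma J_ne_zero : J ≠ 0 := by decide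

set_option synthInstance.maxHeartbeats 1000000 in
lemma prime_of_norm_prime (z : GaussianInt) (h : Prime z.norm) : Prime z := by
  rw [← irreducible_iff_prime]
  constructor
  · intro hu
    rw [← Zsqrtd.norm_eq_one_iff' (by norm_num) z] at hu
    rw [hu] at h; exact h.not_unit isUnit_one
  · intro a b hab
    have hn := congrArg Zsqrtd.norm hab
    rw [Zsqrtd.norm_mul] at hn
    rcases h.irreducible.isUnit_or_isUnit hn with h1 | h1 <;>
      [left; right] <;>
      · rw [← Zsqrtd.norm_eq_one_iff' (by norm_num)]
        rw [Int.isUnit_iff] at h1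
        rcases h1 with h1 | h1
        · exact h1
        · exfalso; have := GaussianInt.norm_nonneg a; have := GaussianInt.norm_nonneg b; omega

lemma primeA : Prime A := prime_of_norm_prime A (by rw [normA]; norm_num)
lemma primeB : Prime B := prime_of_norm_prime B (by rw [normB]; norm_num)

lemma not_A_dvd_B : ¬ A ∣ B := by
  intro h
  obtain ⟨c, hc⟩ : A ∣ A - B := dvd_sub dvd_rfl h
  have hn := congrArg Zsqrtd.norm hc
  rw [Zsqrtd.norm_mul, normA] at hn
  have h4 : (A - B).norm = 4 := by decide
  have := GaussianInt.norm_nonneg c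
  omega

lemma unit_eq (w : GaussianInt) (h : w.norm = 1) : ∃ u < 4, w = J ^ u := by
  rw [Zsqrtd.norm_def] at h
  have h1 : w.re * w.re + w.im * w.im = 1 := by linarith
  have hr1 : -1 ≤ w.re := by nlinarith
  have hr2 : w.re ≤ 1 := by nlinarith
  have hi1 : -1 ≤ w.im := by nlinarith
  have hi2 : w.im ≤ 1 := by nlinarith
  interval_cases hre : w.re <;> interval_cases him : w.im <;> first
    | omega
    | (exact ⟨0, by norm_num, Zsqrtd.ext (by rw [hre]; decide) (by rw [him]; decide)⟩)
    | (exact ⟨1, by norm_num, Zsqrtd.ext (by rw [hre]; decide) (by rw [him]; decide)⟩)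
    | (exact ⟨2, by norm_num, Zsqrtd.ext (by rw [hre]; decide) (by rw [him]; decide)⟩)
    | (exact ⟨3, by norm_num, Zsqrtd.ext (by rw [hre]; decide) (by rw [him]; decide)⟩)

lemma norm_pow (x : GaussianInt) (n : ℕ) : (x ^ n).norm = x.norm ^ n := by
  induction n with
  | zero => simp
  | succ n ih => rw [pow_succ, Zsqrtd.norm_mul, ih, pow_succ]

lemma norm_f {u a b : ℕ} : (J ^ u * A ^ a * B ^ b).norm = 5 ^ (a + b) := by
  rw [Zsqrtd.norm_mul, Zsqrtd.norm_mul, norm_pow, norm_pow, norm_pow, normA, normB, normJ,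
    one_pow, one_mul, pow_add]

lemma rep (C : ℕ) : ∀ w : GaussianInt, w.norm = 5 ^ C →
    ∃ u < 4, ∃ a ≤ C, w = J ^ u * A ^ a * B ^ (C - a) := by
  induction C with
  | zero =>
    intro w h
    obtain ⟨u, hu, hw⟩ := unit_eq w (by simpa using h)
    exact ⟨u, hu, 0, le_refl _, by simpa using hw⟩
  | succ C ih =>
    intro w h
    have h5 : A ∣ w * star w := by
      rw [← Zsqrtd.norm_eq_mul_conj, h]
      push_cast
      exact dvd_pow (Dvd.intro B A_mul_B.symm) (Nat.succ_ne_zero C)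
    rcases primeA.2.2 w (star w) h5 with hd | hd
    · obtain ⟨v, hv⟩ := hd
      have hnv : v.norm = 5 ^ C := by
        have := congrArg Zsqrtd.norm hv
        rw [Zsqrtd.norm_mul, normA, h, pow_succ] at this
        have h50 : (5:ℤ) ≠ 0 := by norm_num
        exact mul_left_cancel₀ h50 (by linarith)
      obtain ⟨u, hu, a, ha, hrep⟩ := ih v hnv
      refine ⟨u, hu, a + 1, by omega, ?_⟩
      rw [hv, hrep]
      have : C + 1 - (a + 1) = C - a := by omega
      rw [this, pow_succ]
      ring
    · obtain ⟨c, hc⟩ := hd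
      have hv : w = B * star c := by
        have := congrArg star hc
        rw [star_star, star_mul', starA] at this
        exact this
      have hnv : (star c).norm = 5 ^ C := by
        have := congrArg Zsqrtd.norm hv
        rw [Zsqrtd.norm_mul, normB, h, pow_succ] at this
        have h50 : (5:ℤ) ≠ 0 := by norm_num
        exact mul_left_cancel₀ h50 (by linarith)
      obtain ⟨u, hu, a, ha, hrep⟩ := ih (star c) hnv
      refine ⟨u, hu, a, by omega, ?_⟩
      rw [hv, hrep]
      have : C + 1 - a = (C - a) + 1 := by omega
      rw [this, pow_succ]
      ring

lemma rep_inj (C : ℕ) {u v a b : ℕ} (hu : u < 4) (hv : v < 4) (ha : a ≤ C) (hb : b ≤ C)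
    (h : J ^ u * A ^ a * B ^ (C - a) = J ^ v * A ^ b * B ^ (C - b)) : u = v ∧ a = b := by
  have hab : a = b := by
    by_contra hne
    wlog hlt : a < b generalizing u v a b
    · exact this hv hu hb ha h.symm (Ne.symm hne) (by omega)
    have hdvd : A ^ a * A ∣ J ^ u * A ^ a * B ^ (C - a) := by
      rw [h, ← pow_succ]
      exact (pow_dvd_pow A (show a + 1 ≤ b by omega)).trans ⟨J ^ v * B ^ (C - b), by ring⟩
    have hdvd2 : A ∣ J ^ u * B ^ (C - a) := by
      have h' : A ^ a * A ∣ A ^ a * (J ^ u * B ^ (C - a)) := by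
        have : J ^ u * A ^ a * B ^ (C - a) = A ^ a * (J ^ u * B ^ (C - a)) := by ring
        rwa [this] at hdvd
      exact (mul_dvd_mul_iff_left (pow_ne_zero a A_ne_zero)).mp h'
    have hJ : IsUnit J := (Zsqrtd.norm_eq_one_iff' (by norm_num) J).mp normJ
    rcases primeA.2.2 _ _ hdvd2 with hd | hd
    · exact primeA.not_unit (isUnit_of_dvd_unit hd (hJ.pow u))
    · exact not_A_dvd_B (primeA.dvd_of_dvd_pow hd)
  subst hab
  rw [mul_assoc, mul_assoc] at h
  have hcancel : J ^ u = J ^ v :=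
    mul_right_cancel₀ (mul_ne_zero (pow_ne_zero a A_ne_zero) (pow_ne_zero _ B_ne_zero)) h
  refine ⟨?_, rfl⟩
  interval_cases u <;> interval_cases v <;> revert hcancel <;> decide

end SqSum5

open SqSum5 in
theorem stmt_0 (C : ℕ) :
    {z : ℤ × ℤ | z.1 ^ 2 + z.2 ^ 2 = (5 : ℤ) ^ C}.ncard = 4 * (C + 1) := by
  classical
  set S : Set GaussianInt := {w | w.norm = 5 ^ C} with hS
  have hmain : S.ncard = 4 * (C + 1) := by
    have hSF : S = ↑((Finset.range 4 ×ˢ Finset.range (C + 1)).image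
        (fun p : ℕ × ℕ => J ^ p.1 * A ^ p.2 * B ^ (C - p.2))) := by
      ext w
      simp only [Finset.coe_image, Set.mem_image, Finset.mem_coe, Finset.mem_product,
        Finset.mem_range, hS, Set.mem_setOf_eq]
      constructor
      · intro hw
        obtain ⟨u, hu, a, ha, hrep⟩ := rep C w hw
        exact ⟨(u, a), ⟨hu, by omega⟩, hrep.symm⟩
      · rintro ⟨⟨u, a⟩, ⟨hu, ha⟩, rfl⟩
        rw [norm_f]
        congr 1
        omega
    rw [hSF, Set.ncard_coe_finset, Finset.card_image_of_injOn, Finset.card_product,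
      Finset.card_range, Finset.card_range]
    rintro ⟨u, a⟩ hp ⟨v, b⟩ hq hpq
    have hp' := Finset.mem_product.mp hp
    have hq' := Finset.mem_product.mp hq
    rw [Finset.mem_range] at hp' hq'
    have hp2 := Finset.mem_range.mp hp'.2
    have hq2 := Finset.mem_range.mp hq'.2
    obtain ⟨h1, h2⟩ := rep_inj C hp'.1 hq'.1 (by omega) (by omega) hpq
    exact Prod.ext h1 h2
  have himg : {z : ℤ × ℤ | z.1 ^ 2 + z.2 ^ 2 = (5 : ℤ) ^ C} =
      (fun w : GaussianInt => (w.re, w.im)) '' S := by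
    ext ⟨x, y⟩
    simp only [Set.mem_setOf_eq, Set.mem_image, hS]
    constructor
    · intro h
      exact ⟨⟨x, y⟩, by rw [Zsqrtd.norm_def]; linear_combination h, rfl⟩
    · rintro ⟨w, hw, heq⟩
      rw [Zsqrtd.norm_def] at hw
      obtain rfl : w.re = x := congrArg Prod.fst heq
      obtain rfl : w.im = y := congrArg Prod.snd heq
      linear_combination hw
  rw [himg, Set.ncard_image_of_injective _ (fun w₁ w₂ hw => by
    simp only [Prod.ext_iff] at hw; exact Zsqrtd.ext hw.1 hw.2), hmain]
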